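/- For continuous f, v : [0,1] → ℝ, the dyadic quadratic variation at time 1 satisfies the Cesàro-mean formula [f,v]_{k+1}(1) = (1/2)[f,v]_k(1) + (1/2) Σ_m f_{km} v_{km}, and consequently [f,v]_{k+1}(1) = 2^{−(k+1)} Σ_{p≤k} Σ_m 2^p f_{pm} v_{pm}. -/

import Mathlib

noncomputable section
open Set

/-- The `k`-th dyadic quadratic covariation
`[f,v]_k(t) = ∑_{m=1}^{2^k} (f(t²_{km}∧t) - f(t⁰_{km}∧t))(v(t²_{km}∧t) - v(t⁰_{km}∧t))`. -/
def qvar (f v : ℝ → ℝ) (k : ℕ) (t : ℝ) : ℝ :=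
  ∑ m ∈ Finset.range (2 ^ k),
    (f (min (((m : ℝ) + 1) / 2 ^ k) t) - f (min ((m : ℝ) / 2 ^ k) t)) *
      (v (min (((m : ℝ) + 1) / 2 ^ k) t) - v (min ((m : ℝ) / 2 ^ k) t))

/-- The (rescaled) Schauder coefficient `f_{pm} = 2f(t¹_{pm}) - f(t⁰_{pm}) - f(t²_{pm})`,
with the conventions `f_{00} = f(1) - f(0)` and `f_{p0} = 0` for `p ≥ 1`. -/
def coeff (f : ℝ → ℝ) (p m : ℕ) : ℝ :=
  if m = 0 then (if p = 0 then f 1 - f 0 else 0)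
  else 2 * f ((2 * (m : ℝ) - 1) / 2 ^ (p + 1)) - f (((m : ℝ) - 1) / 2 ^ p) - f ((m : ℝ) / 2 ^ p)

private lemma sum_range_two_mul (n : ℕ) (g : ℕ → ℝ) :
    ∑ i ∈ Finset.range (2 * n), g i = ∑ i ∈ Finset.range n, (g (2 * i) + g (2 * i + 1)) := by
  induction n with
  | zero => simp
  | succ n ih =>
      rw [Nat.mul_succ, Finset.sum_range_succ, Finset.sum_range_succ, Finset.sum_range_succ, ih]
      ring

private lemma qvar_one (f v : ℝ → ℝ) (k : ℕ) :
    qvar f v k 1 = ∑ m ∈ Finset.range (2 ^ k),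
      (f (((m : ℝ) + 1) / 2 ^ k) - f ((m : ℝ) / 2 ^ k)) *
        (v (((m : ℝ) + 1) / 2 ^ k) - v ((m : ℝ) / 2 ^ k)) := by
  refine Finset.sum_congr rfl fun m hm => ?_
  have hm' : (m : ℝ) + 1 ≤ 2 ^ k := by
    have := Finset.mem_range.mp hm
    exact_mod_cast Nat.succ_le_of_lt this
  have h1 : ((m : ℝ) + 1) / 2 ^ k ≤ 1 := by
    rw [div_le_one (by positivity)]; exact hm'
  have h0 : (m : ℝ) / 2 ^ k ≤ 1 := by
    rw [div_le_one (by positivity)]; nlinarith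
  rw [min_eq_left h1, min_eq_left h0]

private lemma part1 (f v : ℝ → ℝ) (k : ℕ) :
    qvar f v (k + 1) 1
        = (1 / 2) * qvar f v k 1 +
          (1 / 2) * ∑ m ∈ Finset.Icc 1 (2 ^ k), coeff f k m * coeff v k m := by
  rw [qvar_one, qvar_one, show 2 ^ (k + 1) = 2 * 2 ^ k from by rw [pow_succ, Nat.mul_comm],
    sum_range_two_mul, show Finset.Icc 1 (2 ^ k) = Finset.Ico 1 (2 ^ k + 1) from by rw [Finset.Ico_add_one_right_eq_Icc],
    Finset.sum_Ico_eq_sum_range]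
  simp only [Nat.add_sub_cancel]
  rw [Finset.mul_sum, Finset.mul_sum, ← Finset.sum_add_distrib]
  refine Finset.sum_congr rfl fun m hm => ?_
  have h2 : ((2 : ℝ)) ^ (k + 1) = 2 * 2 ^ k := by rw [pow_succ]; ring
  have e1 : ((2 * m : ℕ) : ℝ) / 2 ^ (k + 1) = (m : ℝ) / 2 ^ k := by
    push_cast; rw [h2]; field_simp
  have e2 : ((2 * m : ℕ) : ℝ) + 1 + 1 = 2 * ((m : ℝ) + 1) := by push_cast; ring
  have e2' : (2 * ((m : ℝ) + 1)) / 2 ^ (k + 1) = ((m : ℝ) + 1) / 2 ^ k := by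
    rw [h2]; field_simp
  have e3 : ((2 * m + 1 : ℕ) : ℝ) = 2 * (m : ℝ) + 1 := by push_cast; ring
  have e4 : ((2 * m + 1 : ℕ) : ℝ) + 1 = 2 * ((m : ℝ) + 1) := by push_cast; ring
  have hc : ∀ g : ℝ → ℝ, coeff g k (1 + m) =
      2 * g ((2 * (m : ℝ) + 1) / 2 ^ (k + 1)) - g ((m : ℝ) / 2 ^ k) - g (((m : ℝ) + 1) / 2 ^ k) := by
    intro g
    have : (1 + m) ≠ 0 := by omega
    simp only [coeff, this, if_false]
    have c1 : 2 * ((1 + m : ℕ) : ℝ) - 1 = 2 * (m : ℝ) + 1 := by push_cast; ring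
    have c2 : ((1 + m : ℕ) : ℝ) - 1 = (m : ℝ) := by push_cast; ring
    have c3 : ((1 + m : ℕ) : ℝ) = (m : ℝ) + 1 := by push_cast; ring
    rw [c1, c2, c3]
  rw [hc f, hc v, e4, e3, e2', e1]
  push_cast
  ring

private lemma part2 (f v : ℝ → ℝ) (k : ℕ) :
    qvar f v (k + 1) 1
        = (2 : ℝ) ^ (-(k + 1 : ℤ)) *
          ∑ p ∈ Finset.range (k + 1), ∑ m ∈ Finset.range (2 ^ p + 1),
            (2 : ℝ) ^ p * coeff f p m * coeff v p m := by
  induction k with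
  | zero =>
      rw [part1]
      simp only [pow_zero, Finset.Icc_self, Finset.sum_singleton, qvar, Finset.range_one,
        Finset.sum_range_succ, Finset.sum_range_zero]
      norm_num [coeff]
      ring
  | succ k ih =>
      rw [part1, ih, Finset.sum_range_succ _ (k + 1),
        Finset.sum_range_succ' _ (2 ^ (k + 1)),
        show Finset.Icc 1 (2 ^ (k+1)) = Finset.Ico 1 (2 ^ (k+1) + 1) from by
          rw [Finset.Ico_add_one_right_eq_Icc],
        Finset.sum_Ico_eq_sum_range]
      simp only [Nat.add_sub_cancel]
      have hz : (2:ℝ) ^ (k+1) * coeff f (k + 1) 0 * coeff v (k + 1) 0 = 0 := by simp [coeff]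
      rw [hz, add_zero]
      rw [show (∑ i ∈ Finset.range (2 ^ (k + 1)), coeff f (k+1) (1 + i) * coeff v (k+1) (1 + i))
            = ∑ i ∈ Finset.range (2 ^ (k + 1)), coeff f (k+1) (i + 1) * coeff v (k+1) (i + 1)
          from Finset.sum_congr rfl fun i _ => by rw [Nat.add_comm 1 i]]
      have hrw : (∑ i ∈ Finset.range (2 ^ (k + 1)),
            (2:ℝ)^(k+1) * coeff f (k+1) (i+1) * coeff v (k+1) (i+1))
          = (2:ℝ)^(k+1) * ∑ i ∈ Finset.range (2 ^ (k + 1)),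
            coeff f (k+1) (i+1) * coeff v (k+1) (i+1) := by
        rw [Finset.mul_sum]; exact Finset.sum_congr rfl fun i _ => by ring
      rw [hrw]
      have h2 : ((2:ℝ)^(k+1) : ℝ) = (2:ℝ) ^ ((k+1 : ℕ) : ℤ) := by
        rw [zpow_natCast]
      have hp : (2:ℝ) ^ (-((k:ℤ) + 1 + 1)) = 1/2 * (2:ℝ) ^ (-((k:ℤ) + 1)) := by
        rw [show -((k:ℤ) + 1 + 1) = -((k:ℤ) + 1) + (-1) from by ring,
          zpow_add₀ (by norm_num : (2:ℝ) ≠ 0)]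
        norm_num
        ring
      have hq : (2:ℝ) ^ (-((k:ℤ) + 1 + 1)) * (2:ℝ) ^ (k+1) = 1/2 := by
        rw [h2, ← zpow_add₀ (by norm_num : (2:ℝ) ≠ 0),
          show -((k:ℤ) + 1 + 1) + ((k+1 : ℕ) : ℤ) = -1 from by push_cast; ring]
        norm_num
      push_cast
      linear_combination (-(∑ p ∈ Finset.range (k + 1), ∑ m ∈ Finset.range (2 ^ p + 1),
          (2:ℝ) ^ p * coeff f p m * coeff v p m)) * hp +
        (-(∑ i ∈ Finset.range (2 ^ (k + 1)),
          coeff f (k+1) (i+1) * coeff v (k+1) (i+1))) * hq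

/-- Cesàro-mean formula for the dyadic quadratic covariation at time `1`:
`[f,v]_{k+1}(1) = (1/2)[f,v]_k(1) + (1/2)∑_m f_{km}v_{km}`, hence
`[f,v]_{k+1}(1) = 2^{-(k+1)} ∑_{p≤k} ∑_m 2^p f_{pm} v_{pm}`. -/
theorem qvar_cesaro (f v : ℝ → ℝ)
    (hf : ContinuousOn f (Icc 0 1)) (hv : ContinuousOn v (Icc 0 1)) (k : ℕ) :
    qvar f v (k + 1) 1
        = (1 / 2) * qvar f v k 1 +
          (1 / 2) * ∑ m ∈ Finset.Icc 1 (2 ^ k), coeff f k m * coeff v k m ∧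
    qvar f v (k + 1) 1
        = (2 : ℝ) ^ (-(k + 1 : ℤ)) *
          ∑ p ∈ Finset.range (k + 1), ∑ m ∈ Finset.range (2 ^ p + 1),
            (2 : ℝ) ^ p * coeff f p m * coeff v p m := by
  exact ⟨part1 f v k, part2 f v k⟩
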